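/- For every n ≥ 1, the number of irreducible packed words of length n equals the number of packed trees of weight n, i.e. #{w ∈ PW_n : w irreducible} = #𝔗_n. -/

import Mathlib

/-- The maximum letter of a word (a list of natural numbers), with `wmax [] = 0`. -/
def wmax (w : List ℕ) : ℕ := w.foldr max 0

/-- A word over the positive integers is packed if every letter from `1` to its maximum
occurs in it. -/
def IsPacked (w : List ℕ) : Prop :=
  (∀ x ∈ w, 0 < x) ∧ ∀ i : ℕ, 0 < i → i ≤ wmax w → i ∈ w

/-- `c` is a global descent of `w` (positions are 1-based, `1 ≤ c ≤ |w| - 1`). -/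
def GlobalDescent (w : List ℕ) (c : ℕ) : Prop :=
  1 ≤ c ∧ c + 1 ≤ w.length ∧ ∀ a ∈ w.take c, ∀ b ∈ w.drop c, b < a

/-- A packed word is irreducible if it is nonempty and has no global descent. -/
def Irred (w : List ℕ) : Prop :=
  IsPacked w ∧ w ≠ [] ∧ ∀ c, ¬ GlobalDescent w c

/-- A labeled biplane tree: every node carries a label (a list of positive integers)
and an ordered pair of (possibly empty) ordered forests of children. -/
inductive LTree : Type where
  | node : List ℕ → List LTree → List LTree → LTree

instance : Inhabited LTree := ⟨.node [] [] []⟩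

mutual
  /-- The weight of a labeled biplane tree: the sum over all nodes of the lengths of
  their labels. -/
  def LTree.weight : LTree → ℕ
    | .node I fl fr => I.length + forestWeight fl + forestWeight fr
  /-- The weight of a forest: the sum of the weights of its trees. -/
  def forestWeight : List LTree → ℕ
    | [] => 0
    | t :: ts => t.weight + forestWeight ts
end

/-- The right-weight `ω_r(t) = p + ω(r_1) + ⋯ + ω(r_d)`. -/
def rightWeight : LTree → ℕ
  | .node I _ fr => I.length + forestWeight fr

/-- The left forest of a labeled biplane tree. -/
def leftForest : LTree → List LTree
  | .node _ fl _ => fl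

/-- Packed trees: the label `I = (i_1 < ⋯ < i_p)` is a nonempty strictly increasing list
of positive integers; if the right forest is empty then `I = (1, …, p)`; otherwise
`1 ≤ i_1 ≤ ω(r_1)` and `1 ≤ ω_r(t) + 1 − i_p ≤ ω(r_d)`; and all subtrees are packed. -/
inductive IsPT : LTree → Prop where
  | mk (I : List ℕ) (fl fr : List LTree) :
      I ≠ [] → I.Pairwise (· < ·) → (∀ i ∈ I, 0 < i) →
      (fr = [] → I = List.range' 1 I.length) →
      (fr ≠ [] →
        (1 ≤ I.headI ∧ I.headI ≤ fr.headI.weight ∧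
         1 ≤ rightWeight (.node I fl fr) + 1 - I.getLastI ∧
         rightWeight (.node I fl fr) + 1 - I.getLastI ≤ fr.getLastI.weight)) →
      (∀ t ∈ fl, IsPT t) → (∀ t ∈ fr, IsPT t) →
      IsPT (.node I fl fr)

-- ====== Group A : wmax and shift utilities ======
theorem wmax_le_iff {w : List ℕ} {k : ℕ} : wmax w ≤ k ↔ ∀ x ∈ w, x ≤ k := by
  induction w with
  | nil => simp [wmax]
  | cons a w ih =>
    simp only [wmax, List.foldr_cons, max_le_iff, List.mem_cons] at ih ⊢
    constructor
    · rintro ⟨h1, h2⟩ x (rfl | hx); exact h1; exact ih.1 h2 x hx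
    · intro h; exact ⟨h a (Or.inl rfl), ih.2 fun x hx => h x (Or.inr hx)⟩

theorem le_wmax {w : List ℕ} {x : ℕ} (h : x ∈ w) : x ≤ wmax w :=
  wmax_le_iff.mp le_rfl x h

theorem wmax_append (a b : List ℕ) : wmax (a ++ b) = max (wmax a) (wmax b) := by
  induction a with
  | nil => simp [wmax]
  | cons x a ih => simp [wmax] at ih ⊢; rw [ih]

theorem wmax_mem {w : List ℕ} (h : w ≠ []) : wmax w ∈ w := by
  induction w with
  | nil => simp at h
  | cons a w ih =>
    rcases eq_or_ne w [] with rfl | hw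
    · simp [wmax]
    · have : wmax (a :: w) = max a (wmax w) := rfl
      rw [this]
      rcases le_total a (wmax w) with h1 | h1
      · rw [max_eq_right h1]; exact List.mem_cons_of_mem _ (ih hw)
      · rw [max_eq_left h1]; exact List.mem_cons_self

theorem wmax_shift {w : List ℕ} (h : w ≠ []) (k : ℕ) :
    wmax (w.map (· + k)) = wmax w + k := by
  apply le_antisymm
  · rw [wmax_le_iff]; rintro x hx
    rcases List.mem_map.mp hx with ⟨y, hy, rfl⟩
    exact Nat.add_le_add_right (le_wmax hy) k
  · exact le_wmax (List.mem_map.mpr ⟨wmax w, wmax_mem h, rfl⟩)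

theorem wmax_shift_le (w : List ℕ) (k : ℕ) : wmax (w.map (· + k)) ≤ wmax w + k := by
  rcases eq_or_ne w [] with rfl | h
  · simp [wmax]
  · exact (wmax_shift h k).le

theorem shift_injective (k : ℕ) {a b : List ℕ} (h : a.map (· + k) = b.map (· + k)) :
    a = b := by
  have := congrArg (List.map (· - k)) h
  simpa [List.map_map, Function.comp_def] using this
-- ====== Group B : place ======
/-- Insert copies of `m` into `v` with gaps `G`. -/
def place (m : ℕ) : List ℕ → List ℕ → List ℕ
  | [], v => v
  | g :: G, v => v.take g ++ m :: place m G (v.drop g)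

theorem place_nil (m : ℕ) (v : List ℕ) : place m [] v = v := rfl

theorem place_cons (m g : ℕ) (G : List ℕ) (v : List ℕ) :
    place m (g :: G) v = v.take g ++ m :: place m G (v.drop g) := rfl

theorem length_place (m : ℕ) {G v : List ℕ} (h : G.sum ≤ v.length) :
    (place m G v).length = G.length + v.length := by
  induction G generalizing v with
  | nil => simp [place]
  | cons g G ih =>
    simp only [List.sum_cons] at h
    have hg : g ≤ v.length := by omega
    rw [place_cons]
    have hrec : G.sum ≤ (v.drop g).length := by rw [List.length_drop]; omega
    simp [ih hrec, List.length_take, List.length_drop]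
    omega

theorem count_place_self (m : ℕ) (G v : List ℕ) :
    (place m G v).count m = G.length + v.count m := by
  induction G generalizing v with
  | nil => simp [place]
  | cons g G ih =>
    have hv : (v.take g).count m + (v.drop g).count m = v.count m := by
      rw [← List.count_append, List.take_append_drop]
    rw [place_cons, List.count_append, List.count_cons_self, ih, List.length_cons]
    omega

theorem count_place_ne {m x : ℕ} (hx : x ≠ m) (G v : List ℕ) :
    (place m G v).count x = v.count x := by
  induction G generalizing v with
  | nil => simp [place]
  | cons g G ih =>
    have hv : (v.take g).count x + (v.drop g).count x = v.count x := by
      rw [← List.count_append, List.take_append_drop]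
    rw [place_cons, List.count_append, List.count_cons_of_ne (Ne.symm hx), ih]
    omega

theorem mem_place_of_mem (m x : ℕ) {G v : List ℕ} (h : x ∈ v) : x ∈ place m G v := by
  have h1 : 0 < v.count x := List.count_pos_iff.mpr h
  apply List.count_pos_iff.mp
  rcases eq_or_ne x m with rfl | hx
  · rw [count_place_self]; omega
  · rw [count_place_ne hx]; omega

theorem mem_place_self (m : ℕ) {G : List ℕ} (v : List ℕ) (h : G ≠ []) :
    m ∈ place m G v := by
  have h1 : 1 ≤ G.length := by cases G; simp at h; simp
  have h2 := count_place_self m G v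
  apply List.count_pos_iff.mp
  omega

theorem mem_of_mem_place {m x : ℕ} {G v : List ℕ} (h : x ∈ place m G v) :
    x ∈ v ∨ x = m := by
  by_cases hx : x = m
  · exact Or.inr hx
  · left
    have h1 : 0 < (place m G v).count x := List.count_pos_iff.mpr h
    rw [count_place_ne hx] at h1
    exact List.count_pos_iff.mp h1

theorem filter_place (m : ℕ) {G v : List ℕ} (hm : m ∉ v) :
    (place m G v).filter (fun x => x ≠ m) = v := by
  induction G generalizing v with
  | nil =>
    rw [place_nil]
    exact List.filter_eq_self.mpr (fun a ha => by
      simp only [ne_eq, decide_eq_true_eq, decide_not]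
      simp only [Bool.not_eq_true', decide_eq_false_iff_not]
      exact fun h => hm (h ▸ ha))
  | cons g G ih =>
    rw [place_cons, List.filter_append, List.filter_cons]
    have h1 : (v.take g).filter (fun x => x ≠ m) = v.take g :=
      List.filter_eq_self.mpr (fun a ha => by
        simp only [ne_eq, decide_not, Bool.not_eq_true', decide_eq_false_iff_not]
        exact fun h => hm (h ▸ List.mem_of_mem_take ha))
    rw [h1, if_neg (by simp), ih (fun h => hm (List.mem_of_mem_drop h))]
    exact List.take_append_drop g v

theorem drop_place (m : ℕ) {G v : List ℕ} {j : ℕ} (hs : G.sum ≤ v.length)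
    (hj : G.length + G.sum ≤ j) :
    (place m G v).drop j = v.drop (j - G.length) := by
  induction G generalizing v j with
  | nil => simp [place]
  | cons g G ih =>
    rw [place_cons]
    simp only [List.sum_cons, List.length_cons] at hs hj
    have hg : g ≤ v.length := by omega
    rw [List.drop_append]
    rw [List.drop_eq_nil_of_le (by rw [List.length_take, min_eq_left hg]; omega)]
    rw [List.length_take, min_eq_left hg]
    simp only [List.nil_append]
    have hj2 : 1 ≤ j - g := by omega
    obtain ⟨j', hj'⟩ : ∃ j', j - g = j' + 1 := ⟨j - g - 1, by omega⟩
    rw [hj', List.drop_succ_cons]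
    rw [ih (v := v.drop g) (by rw [List.length_drop]; omega) (by omega)]
    rw [List.drop_drop]
    simp only [List.length_cons]
    congr 1
    omega

theorem mem_drop_place (m : ℕ) {G v : List ℕ} {c : ℕ} (hs : G.sum ≤ v.length)
    (hc : c < G.length + G.sum) : m ∈ (place m G v).drop c := by
  induction G generalizing v c with
  | nil => simp at hc
  | cons g G ih =>
    rw [place_cons]
    simp only [List.sum_cons, List.length_cons] at hs hc
    have hg : g ≤ v.length := by omega
    rw [List.drop_append, List.length_take, min_eq_left hg]
    by_cases h : c ≤ g
    · rcases Nat.lt_or_ge c g with h' | h'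
      · have : c - g = 0 := by omega
        rw [this, List.drop_zero]
        exact List.mem_append_right _ (List.mem_cons_self)
      · have hcg : c = g := by omega
        rw [hcg, Nat.sub_self, List.drop_zero]
        exact List.mem_append_right _ (List.mem_cons_self)
    · push_neg at h
      obtain ⟨c', hc'⟩ : ∃ c', c - g = c' + 1 := ⟨c - g - 1, by omega⟩
      rw [hc', List.drop_succ_cons]
      refine List.mem_append_right _ ?_
      exact ih (v := v.drop g) (c := c') (by rw [List.length_drop]; omega) (by omega)

theorem place_append (m : ℕ) (g : ℕ) (T : List ℕ) {u : List ℕ} (v : List ℕ)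
    (h : u.length ≤ g) :
    place m (g :: T) (u ++ v) = u ++ place m ((g - u.length) :: T) v := by
  rw [place_cons, place_cons]
  rw [List.take_append, List.take_of_length_le h,
    List.drop_append, List.drop_eq_nil_of_le h]
  simp

theorem place_cons_succ (m g : ℕ) (G : List ℕ) (a : ℕ) (v : List ℕ) :
    place m ((g+1) :: G) (a :: v) = a :: place m (g :: G) v := by
  rw [place_cons, place_cons]
  simp

theorem place_zero_cons (m : ℕ) (G : List ℕ) (v : List ℕ) :
    place m (0 :: G) v = m :: place m G v := by
  rw [place_cons]; simp

theorem place_inj_aux (m : ℕ) (G G' : List ℕ)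
    (ih : ∀ v v', m ∉ v → m ∉ v' → G.sum ≤ v.length → G'.sum ≤ v'.length →
      place m G v = place m G' v' → G = G' ∧ v = v') :
    ∀ g g' v v', m ∉ v → m ∉ v' → (g :: G).sum ≤ v.length →
      (g' :: G').sum ≤ v'.length →
      place m (g :: G) v = place m (g' :: G') v' → g = g' ∧ G = G' ∧ v = v' := by
  intro g
  induction g with
  | zero =>
    intro g' v v' hm hm' hs hs' heq
    cases g' with
    | zero =>
      rw [place_zero_cons, place_zero_cons] at heq
      injection heq with _ heq2
      simp only [List.sum_cons, Nat.zero_add] at hs hs'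
      obtain ⟨h1, h2⟩ := ih v v' hm hm' hs hs' heq2
      exact ⟨rfl, h1, h2⟩
    | succ g'' =>
      exfalso
      simp only [List.sum_cons] at hs'
      obtain ⟨a', v'2, rfl⟩ : ∃ a' v'2, v' = a' :: v'2 := by
        cases v' with
        | nil => simp at hs'
        | cons a' v'2 => exact ⟨a', v'2, rfl⟩
      rw [place_zero_cons, place_cons_succ] at heq
      injection heq with h1 _
      exact hm' (h1 ▸ List.mem_cons_self)
  | succ g2 ih2 =>
    intro g' v v' hm hm' hs hs' heq
    simp only [List.sum_cons] at hs hs'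
    obtain ⟨a, v2, rfl⟩ : ∃ a v2, v = a :: v2 := by
      cases v with
      | nil => simp at hs
      | cons a v2 => exact ⟨a, v2, rfl⟩
    cases g' with
    | zero =>
      exfalso
      rw [place_zero_cons, place_cons_succ] at heq
      injection heq with h1 _
      exact hm (h1.symm ▸ List.mem_cons_self)
    | succ g'' =>
      obtain ⟨a', v'2, rfl⟩ : ∃ a' v'2, v' = a' :: v'2 := by
        cases v' with
        | nil => simp at hs'
        | cons a' v'2 => exact ⟨a', v'2, rfl⟩
      rw [place_cons_succ, place_cons_succ] at heq
      injection heq with h1 h2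
      have hm2 : m ∉ v2 := fun h => hm (List.mem_cons_of_mem _ h)
      have hm'2 : m ∉ v'2 := fun h => hm' (List.mem_cons_of_mem _ h)
      obtain ⟨h3, h4, h5⟩ := ih2 g'' v2 v'2 hm2 hm'2
        (by simp only [List.sum_cons]; simp at hs; omega)
        (by simp only [List.sum_cons]; simp at hs'; omega) h2
      exact ⟨by omega, h4, by rw [h1, h5]⟩

theorem place_inj (m : ℕ) : ∀ {G v G' v' : List ℕ}, m ∉ v → m ∉ v' →
    G.sum ≤ v.length → G'.sum ≤ v'.length →
    place m G v = place m G' v' → G = G' ∧ v = v' := by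
  intro G
  induction G with
  | nil =>
    intro v G' v' hm hm' _ hs' heq
    cases G' with
    | nil => exact ⟨rfl, by simpa [place] using heq⟩
    | cons g' G'2 =>
      exfalso
      rw [place_nil] at heq
      exact hm (heq ▸ mem_place_self m v' (by simp))
  | cons g G ih =>
    intro v G' v' hm hm' hs hs' heq
    cases G' with
    | nil =>
      exfalso
      rw [place_nil] at heq
      exact hm' (heq.symm ▸ mem_place_self m v (by simp))
    | cons g' G'2 =>
      obtain ⟨h1, h2, h3⟩ := place_inj_aux m G G'2
        (fun w w' a b c d e => ih a b c d e) g g' v v' hm hm' hs hs' heq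
      exact ⟨by rw [h1, h2], h3⟩
-- ====== Group C : gaps ======
def fromGaps (prev : ℕ) : List ℕ → List ℕ
  | [] => []
  | g :: G => (prev + g + 1) :: fromGaps (prev + g + 1) G

def toGaps (prev : ℕ) : List ℕ → List ℕ
  | [] => []
  | i :: I => (i - prev - 1) :: toGaps i I

theorem getLastI_cons_cons (a b : ℕ) (l : List ℕ) :
    (a :: b :: l).getLastI = (b :: l).getLastI := by
  simp [List.getLastI_eq_getLast?]

theorem toGaps_fromGaps (prev : ℕ) (G : List ℕ) :
    toGaps prev (fromGaps prev G) = G := by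
  induction G generalizing prev with
  | nil => rfl
  | cons g G ih =>
    simp only [fromGaps, toGaps, ih]
    congr 1
    omega

theorem fromGaps_toGaps {prev : ℕ} {I : List ℕ} (hs : I.Pairwise (· < ·))
    (hp : ∀ i ∈ I, prev < i) : fromGaps prev (toGaps prev I) = I := by
  induction I generalizing prev with
  | nil => rfl
  | cons i I ih =>
    have hi : prev < i := hp i (List.mem_cons_self)
    simp only [toGaps, fromGaps]
    have h1 : prev + (i - prev - 1) + 1 = i := by omega
    rw [h1, ih (List.pairwise_cons.mp hs).2 (List.pairwise_cons.mp hs).1]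

theorem length_fromGaps (prev : ℕ) (G : List ℕ) :
    (fromGaps prev G).length = G.length := by
  induction G generalizing prev with
  | nil => rfl
  | cons g G ih => simp [fromGaps, ih]

theorem length_toGaps (prev : ℕ) (I : List ℕ) :
    (toGaps prev I).length = I.length := by
  induction I generalizing prev with
  | nil => rfl
  | cons i I ih => simp [toGaps, ih]

theorem fromGaps_ne_nil {prev : ℕ} {G : List ℕ} (h : G ≠ []) :
    fromGaps prev G ≠ [] := by
  cases G; simp at h; simp [fromGaps]

theorem toGaps_ne_nil {prev : ℕ} {I : List ℕ} (h : I ≠ []) :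
    toGaps prev I ≠ [] := by
  cases I; simp at h; simp [toGaps]

theorem mem_fromGaps_gt (prev : ℕ) (G : List ℕ) :
    ∀ i ∈ fromGaps prev G, prev < i := by
  induction G generalizing prev with
  | nil => simp [fromGaps]
  | cons g G ih =>
    intro i hi
    rcases List.mem_cons.mp hi with rfl | hi
    · omega
    · have := ih (prev + g + 1) i hi; omega

theorem sorted_fromGaps (prev : ℕ) (G : List ℕ) :
    (fromGaps prev G).Pairwise (· < ·) := by
  induction G generalizing prev with
  | nil => simp [fromGaps]
  | cons g G ih =>
    simp only [fromGaps, List.pairwise_cons]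
    exact ⟨mem_fromGaps_gt _ _, ih _⟩

theorem headI_fromGaps (prev g : ℕ) (G : List ℕ) :
    (fromGaps prev (g :: G)).headI = prev + g + 1 := rfl

theorem getLastI_fromGaps (prev : ℕ) {G : List ℕ} (h : G ≠ []) :
    (fromGaps prev G).getLastI = prev + G.length + G.sum := by
  induction G generalizing prev with
  | nil => simp at h
  | cons g G ih =>
    rcases eq_or_ne G [] with rfl | hG
    · simp [fromGaps, List.getLastI]; omega
    · have h2 := ih (prev := prev + g + 1) hG
      simp only [fromGaps]
      obtain ⟨g2, G2, rfl⟩ : ∃ g2 G2, G = g2 :: G2 := by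
        cases G; simp at hG; exact ⟨_, _, rfl⟩
      rw [show fromGaps (prev + g + 1) (g2 :: G2) =
        (prev + g + 1 + g2 + 1) :: fromGaps (prev + g + 1 + g2 + 1) G2 from rfl]
      rw [getLastI_cons_cons]
      rw [show (prev + g + 1 + g2 + 1) :: fromGaps (prev + g + 1 + g2 + 1) G2 =
        fromGaps (prev + g + 1) (g2 :: G2) from rfl]
      rw [h2]
      simp [List.sum_cons]
      omega

theorem fromGaps_zeros {prev : ℕ} {G : List ℕ} (h : G.sum = 0) :
    fromGaps prev G = List.range' (prev + 1) G.length := by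
  induction G generalizing prev with
  | nil => rfl
  | cons g G ih =>
    simp only [List.sum_cons] at h
    have hg : g = 0 := by omega
    subst hg
    simp only [fromGaps, ih (by omega), List.length_cons]
    rw [List.range'_succ]

-- ====== Group D : mgaps ======
def mgaps (m : ℕ) : List ℕ → List ℕ
  | [] => []
  | x :: w =>
    if x = m then 0 :: mgaps m w
    else match mgaps m w with
      | [] => []
      | g :: G => (g + 1) :: G

theorem mgaps_cons_self (m : ℕ) (w : List ℕ) : mgaps m (m :: w) = 0 :: mgaps m w := by
  rw [mgaps, if_pos rfl]

theorem mgaps_cons_ne_nil {m x : ℕ} {w : List ℕ} (hx : x ≠ m) (h : mgaps m w = []) :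
    mgaps m (x :: w) = [] := by
  rw [mgaps, if_neg hx, h]

theorem mgaps_cons_ne_cons {m x g : ℕ} {w G : List ℕ} (hx : x ≠ m)
    (h : mgaps m w = g :: G) : mgaps m (x :: w) = (g + 1) :: G := by
  rw [mgaps, if_neg hx, h]

theorem place_mgaps (m : ℕ) (w : List ℕ) :
    place m (mgaps m w) (w.filter (fun x => x ≠ m)) = w := by
  induction w with
  | nil => rfl
  | cons x w ih =>
    by_cases hx : x = m
    · subst hx
      rw [mgaps_cons_self, List.filter_cons_of_neg (by simp), place_zero_cons, ih]
    · rw [List.filter_cons_of_pos (by simpa using hx)]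
      rcases hmg : mgaps m w with _ | ⟨g, G⟩
      · rw [mgaps_cons_ne_nil hx hmg, place_nil]
        rw [hmg, place_nil] at ih
        rw [ih]
      · rw [hmg] at ih
        rw [mgaps_cons_ne_cons hx hmg, place_cons_succ, ih]

theorem length_mgaps (m : ℕ) (w : List ℕ) : (mgaps m w).length = w.count m := by
  induction w with
  | nil => rfl
  | cons x w ih =>
    by_cases hx : x = m
    · subst hx; rw [mgaps_cons_self, List.count_cons_self]; simp [ih]
    · rw [List.count_cons_of_ne hx]
      rcases hmg : mgaps m w with _ | ⟨g, G⟩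
      · rw [mgaps_cons_ne_nil hx hmg, ← ih, hmg]
      · rw [mgaps_cons_ne_cons hx hmg, ← ih, hmg]
        simp

theorem sum_mgaps_le (m : ℕ) (w : List ℕ) :
    (mgaps m w).sum ≤ (w.filter (fun x => x ≠ m)).length := by
  induction w with
  | nil => simp [mgaps]
  | cons x w ih =>
    by_cases hx : x = m
    · subst hx
      rw [mgaps_cons_self, List.filter_cons_of_neg (by simp)]
      simp only [List.sum_cons]
      omega
    · rw [List.filter_cons_of_pos (by simpa using hx)]
      rcases hmg : mgaps m w with _ | ⟨g, G⟩
      · rw [mgaps_cons_ne_nil hx hmg]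
        simp
      · rw [hmg] at ih
        rw [mgaps_cons_ne_cons hx hmg]
        simp only [List.sum_cons, List.length_cons] at ih ⊢
        omega
-- ====== Group E : the word of a packed tree ======
mutual
  def wordT : LTree → List ℕ
    | .node I fl fr =>
      (wordF fl).map (· + wmax (wordF fr)) ++
        place (wmax (wordF fr) + wmax (wordF fl) + 1) (toGaps 0 I) (wordF fr)
  def wordF : List LTree → List ℕ
    | [] => []
    | t :: ts => (wordT t).map (· + wmax (wordF ts)) ++ wordF ts
end

theorem wordT_node (I : List ℕ) (fl fr : List LTree) :
    wordT (.node I fl fr) =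
      (wordF fl).map (· + wmax (wordF fr)) ++
        place (wmax (wordF fr) + wmax (wordF fl) + 1) (toGaps 0 I) (wordF fr) := by
  rw [wordT]

theorem wordF_cons (t : LTree) (ts : List LTree) :
    wordF (t :: ts) = (wordT t).map (· + wmax (wordF ts)) ++ wordF ts := by
  rw [wordF]

theorem wordF_nil : wordF [] = [] := by rw [wordF]

-- basic weight facts
theorem weight_node (I : List ℕ) (fl fr : List LTree) :
    (LTree.node I fl fr).weight = I.length + forestWeight fl + forestWeight fr := by
  rw [LTree.weight]

theorem forestWeight_cons (t : LTree) (ts : List LTree) :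
    forestWeight (t :: ts) = t.weight + forestWeight ts := by rw [forestWeight]

theorem forestWeight_nil : forestWeight [] = 0 := by rw [forestWeight]

theorem forestWeight_append (a b : List LTree) :
    forestWeight (a ++ b) = forestWeight a + forestWeight b := by
  induction a with
  | nil => simp [forestWeight_nil]
  | cons t ts ih => simp [forestWeight_cons, ih]; omega

theorem IsPT.one_le_weight {t : LTree} (h : IsPT t) : 1 ≤ t.weight := by
  cases h with
  | mk I fl fr hne _ _ _ _ _ _ =>
    rw [weight_node]
    have : 1 ≤ I.length := by cases I; simp at hne; simp
    omega

theorem mem_forest_weight_le {t : LTree} {ts : List LTree} (h : t ∈ ts) :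
    t.weight ≤ forestWeight ts := by
  induction ts with
  | nil => simp at h
  | cons s ts ih =>
    rw [forestWeight_cons]
    rcases List.mem_cons.mp h with rfl | h
    · omega
    · have := ih h; omega

-- IsPT destructors
theorem IsPT.label_ne_nil {I : List ℕ} {fl fr : List LTree}
    (h : IsPT (.node I fl fr)) : I ≠ [] := by cases h; assumption

theorem IsPT.label_sorted {I : List ℕ} {fl fr : List LTree}
    (h : IsPT (.node I fl fr)) : I.Pairwise (· < ·) := by cases h; assumption

theorem IsPT.label_pos {I : List ℕ} {fl fr : List LTree}
    (h : IsPT (.node I fl fr)) : ∀ i ∈ I, 0 < i := by cases h; assumption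

theorem IsPT.fr_nil {I : List ℕ} {fl fr : List LTree}
    (h : IsPT (.node I fl fr)) : fr = [] → I = List.range' 1 I.length := by
  cases h; assumption

theorem IsPT.fr_cond {I : List ℕ} {fl fr : List LTree}
    (h : IsPT (.node I fl fr)) : fr ≠ [] →
      (1 ≤ I.headI ∧ I.headI ≤ fr.headI.weight ∧
       1 ≤ rightWeight (.node I fl fr) + 1 - I.getLastI ∧
       rightWeight (.node I fl fr) + 1 - I.getLastI ≤ fr.getLastI.weight) := by
  cases h; assumption

theorem IsPT.fl_mem {I : List ℕ} {fl fr : List LTree}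
    (h : IsPT (.node I fl fr)) : ∀ t ∈ fl, IsPT t := by cases h; assumption

theorem IsPT.fr_mem {I : List ℕ} {fl fr : List LTree}
    (h : IsPT (.node I fl fr)) : ∀ t ∈ fr, IsPT t := by cases h; assumption

-- gap facts for a packed tree label
theorem label_gaps_sum {I : List ℕ} (hne : I ≠ []) (hs : I.Pairwise (· < ·))
    (hp : ∀ i ∈ I, 0 < i) :
    I.getLastI = I.length + (toGaps 0 I).sum := by
  have h1 : fromGaps 0 (toGaps 0 I) = I := fromGaps_toGaps hs hp
  have h2 := getLastI_fromGaps 0 (G := toGaps 0 I) (toGaps_ne_nil hne)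
  rw [h1] at h2
  rw [h2, length_toGaps]
  omega

theorem label_headI {I : List ℕ} (hne : I ≠ []) (hs : I.Pairwise (· < ·))
    (hp : ∀ i ∈ I, 0 < i) :
    ∃ g T, toGaps 0 I = g :: T ∧ I.headI = g + 1 := by
  obtain ⟨i, I2, rfl⟩ : ∃ i I2, I = i :: I2 := by
    cases I; simp at hne; exact ⟨_, _, rfl⟩
  refine ⟨i - 0 - 1, toGaps i I2, rfl, ?_⟩
  have : 0 < i := hp i (List.mem_cons_self)
  simp [List.headI]
  omega
-- ====== Group F : forest word helpers ======
theorem shift_shift (l : List ℕ) (k1 k2 : ℕ) :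
    (l.map (· + k1)).map (· + k2) = l.map (· + (k1 + k2)) := by
  rw [List.map_map]
  apply List.map_congr_left
  intro x _
  simp [Function.comp]
  omega

theorem shift_zero (l : List ℕ) : l.map (· + 0) = l := by
  simp

theorem Irred.ne_nil {w : List ℕ} (h : Irred w) : w ≠ [] := h.2.1
theorem Irred.packed {w : List ℕ} (h : Irred w) : IsPacked w := h.1
theorem Irred.pos {w : List ℕ} (h : Irred w) : ∀ x ∈ w, 0 < x := h.1.1

theorem wmax_wordF_cons (t : LTree) (ts : List LTree) (h : wordT t ≠ []) :
    wmax (wordF (t :: ts)) = wmax (wordT t) + wmax (wordF ts) := by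
  rw [wordF_cons, wmax_append, wmax_shift h]
  omega

/-- Composition of shifted concatenation. -/
theorem wordF_append (as bs : List LTree) :
    wordF (as ++ bs) = (wordF as).map (· + wmax (wordF bs)) ++ wordF bs := by
  induction as with
  | nil => simp [wordF_nil]
  | cons a as ih =>
    rw [List.cons_append, wordF_cons, ih, wordF_cons]
    rcases eq_or_ne (wordF as) [] with hF | hF
    · rw [hF]
      simp [wmax]
    · rw [wmax_append, wmax_shift hF]
      have : max (wmax (wordF as) + wmax (wordF bs)) (wmax (wordF bs)) =
          wmax (wordF as) + wmax (wordF bs) := by omega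
      rw [this, List.map_append, shift_shift]
      rw [List.append_assoc]

/-- Properties of the word of a forest, given pointwise properties of tree words. -/
theorem wordF_props (ts : List LTree)
    (H : ∀ t ∈ ts, (wordT t).length = t.weight ∧ Irred (wordT t)) :
    (wordF ts).length = forestWeight ts ∧ IsPacked (wordF ts) := by
  induction ts with
  | nil =>
    refine ⟨by simp [wordF_nil, forestWeight_nil], ?_, ?_⟩
    · intro x hx; rw [wordF_nil] at hx; simp at hx
    · intro i hi hle; rw [wordF_nil] at hle ⊢; simp [wmax] at hle; omega
  | cons t ts ih =>
    obtain ⟨hlen, hpack⟩ := ih (fun s hs => H s (List.mem_cons_of_mem _ hs))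
    obtain ⟨hlent, hirr⟩ := H t (List.mem_cons_self)
    have hne : wordT t ≠ [] := hirr.ne_nil
    set K := wmax (wordF ts) with hK
    constructor
    · rw [wordF_cons, List.length_append, List.length_map, hlent, forestWeight_cons, hlen]
    · have hwm : wmax (wordF (t :: ts)) = wmax (wordT t) + K := wmax_wordF_cons t ts hne
      constructor
      · intro x hx
        rw [wordF_cons] at hx
        rcases List.mem_append.mp hx with hx | hx
        · obtain ⟨y, hy, rfl⟩ := List.mem_map.mp hx
          have := hirr.pos y hy; omega
        · exact hpack.1 x hx
      · intro i hi hle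
        rw [hwm] at hle
        rw [wordF_cons]
        rcases le_or_gt i K with h1 | h1
        · rcases Nat.eq_zero_or_pos K with h2 | h2
          · omega
          · exact List.mem_append_right _ (hpack.2 i hi h1)
        · refine List.mem_append_left _ ?_
          have h3 : i - K ∈ wordT t := hirr.packed.2 (i - K) (by omega) (by omega)
          exact List.mem_map.mpr ⟨i - K, h3, by omega⟩

/-- The word of a nonempty forest ends with the (unshifted) word of its last tree. -/
theorem wordF_last (ts : List LTree) (h : ts ≠ [])
    (H : ∀ t ∈ ts, (wordT t).length = t.weight ∧ Irred (wordT t)) :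
    ∃ A, wordF ts = A ++ wordT (ts.getLast h) ∧
      A.length + (ts.getLast h).weight = forestWeight ts ∧
      ∀ x ∈ A, wmax (wordT (ts.getLast h)) < x := by
  induction ts with
  | nil => simp at h
  | cons t ts ih =>
    rcases eq_or_ne ts [] with rfl | hts
    · refine ⟨[], ?_, ?_, by simp⟩
      · rw [wordF_cons, wordF_nil]
        simp [wmax]
      · simp [forestWeight_cons, forestWeight_nil, List.getLast]
    · obtain ⟨A', hA1, hA2, hA3⟩ := ih hts (fun s hs => H s (List.mem_cons_of_mem _ hs))
      have hgl : (t :: ts).getLast h = ts.getLast hts := List.getLast_cons hts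
      refine ⟨(wordT t).map (· + wmax (wordF ts)) ++ A', ?_, ?_, ?_⟩
      · rw [wordF_cons, hgl, List.append_assoc, hA1]
      · rw [List.length_append, List.length_map, (H t (List.mem_cons_self)).1,
          forestWeight_cons, hgl]
        omega
      · intro x hx
        rw [hgl]
        rcases List.mem_append.mp hx with hx | hx
        · obtain ⟨y, hy, rfl⟩ := List.mem_map.mp hx
          have hy1 := (H t (List.mem_cons_self)).2.pos y hy
          have : wmax (wordT (ts.getLast hts)) ≤ wmax (wordF ts) := by
            apply wmax_le_iff.mpr
            intro z hz
            apply le_wmax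
            rw [hA1]
            exact List.mem_append_right _ hz
          omega
        · exact hA3 x hx
-- ====== Group G : well-definedness ======
theorem drop_append_of_ge {α : Type*} (a b : List α) (c : ℕ) (h : a.length ≤ c) :
    (a ++ b).drop c = b.drop (c - a.length) := by
  rw [List.drop_append, List.drop_eq_nil_of_le h, List.nil_append]

theorem count_take_drop (x c : ℕ) (w : List ℕ) :
    (w.take c).count x + (w.drop c).count x = w.count x := by
  rw [← List.count_append, List.take_append_drop]

theorem getLastI_eq_getLast (l : List LTree) (h : l ≠ []) :
    l.getLastI = l.getLast h := by
  rw [List.getLastI_eq_getLast?, List.getLast?_eq_getLast h, Option.getD_some]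

theorem wordT_master : ∀ n : ℕ, ∀ t : LTree, IsPT t → t.weight ≤ n →
    (wordT t).length = t.weight ∧ Irred (wordT t) := by
  intro n
  induction n using Nat.strong_induction_on with
  | _ n ihn =>
  rintro ⟨I, fl, fr⟩ hpt hwt
  have hIne : I ≠ [] := hpt.label_ne_nil
  have hIsort : I.Pairwise (· < ·) := hpt.label_sorted
  have hIpos : ∀ i ∈ I, 0 < i := hpt.label_pos
  have hp1 : 1 ≤ I.length := by cases I; simp at hIne; simp
  rw [weight_node] at hwt ⊢
  have hn1 : 1 ≤ n := by omega
  have hsubl : ∀ t ∈ fl, (wordT t).length = t.weight ∧ Irred (wordT t) := by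
    intro t ht
    exact ihn (n - 1) (by omega) t (hpt.fl_mem t ht)
      (by have h1 := mem_forest_weight_le ht; omega)
  have hsubr : ∀ t ∈ fr, (wordT t).length = t.weight ∧ Irred (wordT t) := by
    intro t ht
    exact ihn (n - 1) (by omega) t (hpt.fr_mem t ht)
      (by have h1 := mem_forest_weight_le ht; omega)
  obtain ⟨hlenL, hpackL⟩ := wordF_props fl hsubl
  obtain ⟨hlenR, hpackR⟩ := wordF_props fr hsubr
  -- the gap list
  have hGlen : (toGaps 0 I).length = I.length := length_toGaps 0 I
  have hGne : toGaps 0 I ≠ [] := toGaps_ne_nil hIne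
  have hGsum : (toGaps 0 I).sum ≤ (wordF fr).length := by
    rcases eq_or_ne fr [] with rfl | hfr
    · have hrange := hpt.fr_nil rfl
      have h2 : List.range' 1 I.length = fromGaps 0 (List.replicate I.length 0) := by
        rw [fromGaps_zeros (by simp)]; simp
      have h1 : toGaps 0 I = List.replicate I.length 0 := by
        conv_lhs => rw [hrange, h2]
        rw [toGaps_fromGaps]
      rw [h1]
      simp
    · have hcond := hpt.fr_cond hfr
      have hlast : I.getLastI = I.length + (toGaps 0 I).sum :=
        label_gaps_sum hIne hIsort hIpos
      have hrw : rightWeight (.node I fl fr) = I.length + forestWeight fr := by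
        rw [rightWeight]
      rw [hrw, hlast] at hcond
      rw [hlenR]
      omega
  -- the last-tree condition, in gap form
  have hlastcond : fr ≠ [] →
      (wordF fr).length + 1 - (toGaps 0 I).sum ≤ (fr.getLastI).weight := by
    intro hfr
    have hcond := hpt.fr_cond hfr
    have hlast : I.getLastI = I.length + (toGaps 0 I).sum :=
      label_gaps_sum hIne hIsort hIpos
    have hrw : rightWeight (.node I fl fr) = I.length + forestWeight fr := by
      rw [rightWeight]
    rw [hrw, hlast] at hcond
    rw [hlenR]
    omega
  rw [wordT_node]
  -- abbreviations
  generalize hFLeq : wordF fl = FL at hlenL hpackL ⊢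
  generalize hveq : wordF fr = v at hlenR hpackR hGsum hlastcond ⊢
  generalize hGeq : toGaps 0 I = G at hGlen hGne hGsum hlastcond ⊢
  set M := wmax v with hM
  set L := wmax FL with hL
  set m := M + L + 1 with hm
  set u := FL.map (· + M) with hu
  set z := place m G v with hz
  set w := u ++ z with hw
  -- lengths
  have hulen : u.length = forestWeight fl := by rw [hu, List.length_map, hlenL]
  have hzlen : z.length = I.length + v.length := by
    rw [hz, length_place m hGsum, hGlen]
  have hwlen : w.length = I.length + forestWeight fl + forestWeight fr := by
    rw [hw, List.length_append, hulen, hzlen, hlenR]; omega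
  have hzm : m ∈ z := mem_place_self m v hGne
  have humax : wmax u ≤ L + M := by rw [hu]; exact wmax_shift_le FL M
  have hwmax : wmax w = m := by
    rw [hw, wmax_append]
    have hzmax : wmax z = m := by
      apply le_antisymm
      · apply wmax_le_iff.mpr
        intro x hx
        rcases mem_of_mem_place hx with hx | rfl
        · have := le_wmax hx; omega
        · exact le_rfl
      · exact le_wmax hzm
    rw [hzmax]
    omega
  refine ⟨hwlen, ⟨?_, ?_⟩, ?_, ?_⟩
  · -- positivity
    intro x hx
    rw [hw] at hx
    rcases List.mem_append.mp hx with hx | hx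
    · obtain ⟨y, hy, rfl⟩ := List.mem_map.mp hx
      have := hpackL.1 y hy; omega
    · rcases mem_of_mem_place hx with hx | rfl
      · exact hpackR.1 x hx
      · omega
  · -- coverage
    intro i hi hle
    rw [hwmax] at hle
    rw [hw]
    rcases le_or_gt i M with h1 | h1
    · exact List.mem_append_right _ (mem_place_of_mem m i (hpackR.2 i hi h1))
    · rcases le_or_gt i (M + L) with h2 | h2
      · refine List.mem_append_left _ ?_
        have h3 : i - M ∈ FL := hpackL.2 (i - M) (by omega) (by omega)
        exact List.mem_map.mpr ⟨i - M, h3, by omega⟩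
      · have h3 : i = m := by omega
        exact List.mem_append_right _ (h3 ▸ hzm)
  · -- nonempty
    rw [hw]
    intro hcon
    rw [List.append_eq_nil_iff] at hcon
    rw [hcon.2] at hzm
    simp at hzm
  · -- no global descent
    intro c ⟨hc1, hc2, hcd⟩
    rw [hwlen] at hc2
    -- a maximal element of the prefix
    have htne : w.take c ≠ [] := by
      apply List.ne_nil_of_length_pos
      rw [List.length_take, hwlen]
      omega
    obtain ⟨a, ha⟩ := List.exists_mem_of_ne_nil _ htne
    have haw : a ∈ w := List.mem_of_mem_take ha
    have ham : a ≤ m := by have := le_wmax haw; omega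
    rcases lt_or_ge c (u.length + I.length + G.sum) with hcase | hcase
    · -- some m remains in the suffix : contradiction
      have hmem : m ∈ w.drop c := by
        rw [hw]
        rw [List.drop_append]
        rcases le_or_gt c u.length with h1 | h1
        · refine List.mem_append_right _ ?_
          have : c - u.length = 0 := by omega
          rw [this, List.drop_zero]
          exact hzm
        · refine List.mem_append_right _ ?_
          rw [hz]
          exact mem_drop_place m hGsum (by omega)
      have := hcd a ha m hmem
      omega
    · -- the suffix lies inside the word of the last right tree
      have hfrne : fr ≠ [] := by
        intro hcon
        subst hcon
        rw [forestWeight_nil] at hwlen hc2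
        rw [← hveq, wordF_nil] at hlenR
        simp at hlenR
        omega
      -- decompose v
      obtain ⟨A, hA1, hA2, hA3⟩ := wordF_last fr hfrne hsubr
      rw [hveq] at hA1
      have hglI : fr.getLastI = fr.getLast hfrne := getLastI_eq_getLast fr hfrne
      have hglmem : fr.getLast hfrne ∈ fr := List.getLast_mem hfrne
      have hwd : (wordT (fr.getLast hfrne)).length = (fr.getLast hfrne).weight :=
        (hsubr _ hglmem).1
      have hwd1 : 1 ≤ (fr.getLast hfrne).weight := (hpt.fr_mem _ hglmem).one_le_weight
      have hAlen : A.length + (fr.getLast hfrne).weight = v.length := by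
        rw [hlenR]; exact hA2
      have hlc := hlastcond hfrne
      rw [hglI] at hlc
      -- arithmetic bounds
      have hAltsum : A.length < G.sum := by omega
      have hcv : c - u.length - I.length < v.length := by omega
      -- the suffix of w
      have hdw : w.drop c = (wordT (fr.getLast hfrne)).drop (c - u.length - I.length - A.length) := by
        rw [hw, drop_append_of_ge u z c (by omega), hz,
          drop_place m hGsum (by rw [hGlen]; omega), hGlen, hA1,
          drop_append_of_ge A _ _ (by omega)]
      -- global descent of the last tree's word
      have hIrrgl : Irred (wordT (fr.getLast hfrne)) := (hsubr _ hglmem).2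
      apply hIrrgl.2.2 (c - u.length - I.length - A.length)
      refine ⟨by omega, by rw [hwd]; omega, ?_⟩
      intro a' ha' b hb
      -- b is in the suffix of w
      have hbw : b ∈ w.drop c := by rw [hdw]; exact hb
      -- a' is in the prefix of w, by counting
      have ha'w : a' ∈ w.take c := by
        have e1 := count_take_drop a' c w
        have e2 := count_take_drop a' (c - u.length - I.length - A.length)
          (wordT (fr.getLast hfrne))
        have e3 : w.count a' = u.count a' + z.count a' := by
          rw [hw, List.count_append]
        have e4 : v.count a' ≤ z.count a' := by
          rw [hz]
          rcases eq_or_ne a' m with rfl | hne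
          · rw [count_place_self]; omega
          · rw [count_place_ne hne]
        have e5 : v.count a' = A.count a' + (wordT (fr.getLast hfrne)).count a' := by
          rw [hA1, List.count_append]
        have e6 : (w.drop c).count a' =
            ((wordT (fr.getLast hfrne)).drop (c - u.length - I.length - A.length)).count a' := by
          rw [hdw]
        have e7 : 0 < ((wordT (fr.getLast hfrne)).take
            (c - u.length - I.length - A.length)).count a' :=
          List.count_pos_iff.mpr ha'
        apply List.count_pos_iff.mp
        omega
      exact hcd a' ha'w b hbw
-- ====== Group H : injectivity ======
theorem first_occ_unique {m : ℕ} : ∀ {P P' R R' : List ℕ}, m ∉ P → m ∉ P' →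
    P ++ m :: R = P' ++ m :: R' → P = P' ∧ R = R' := by
  intro P
  induction P with
  | nil =>
    intro P' R R' _ hP' heq
    cases P' with
    | nil => simpa using heq
    | cons x P'' =>
      exfalso
      rw [List.nil_append] at heq
      injection heq with h1 _
      exact hP' (h1 ▸ List.mem_cons_self)
  | cons x P ih =>
    intro P' R R' hP hP' heq
    cases P' with
    | nil =>
      exfalso
      rw [List.nil_append] at heq
      injection heq with h1 _
      exact hP (h1.symm ▸ List.mem_cons_self)
    | cons x' P'' =>
      rw [List.cons_append, List.cons_append] at heq
      injection heq with h1 h2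
      obtain ⟨h3, h4⟩ := ih (fun h => hP (List.mem_cons_of_mem _ h))
        (fun h => hP' (List.mem_cons_of_mem _ h)) h2
      exact ⟨by rw [h1, h3], h4⟩

theorem block_len_aux {a a' b b' : List ℕ} {k k' : ℕ}
    (ha : Irred a) (ha' : Irred a')
    (heq : a.map (· + k) ++ b = a'.map (· + k') ++ b')
    (hk : k = wmax b) (hlt : a.length < a'.length) : False := by
  have hane : a ≠ [] := ha.ne_nil
  have ha1 : 1 ≤ a.length := by cases a; simp at hane; simp
  -- the prefix/suffix property at cut a.length
  have hprop : ∀ α ∈ (a.map (· + k) ++ b).take a.length,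
      ∀ β ∈ (a.map (· + k) ++ b).drop a.length, β < α := by
    intro α hα β hβ
    rw [List.take_append, List.length_map,
      Nat.sub_self, List.take_zero, List.append_nil,
      List.take_of_length_le (by rw [List.length_map])] at hα
    rw [drop_append_of_ge _ _ _ (by rw [List.length_map]),
      List.length_map, Nat.sub_self, List.drop_zero] at hβ
    obtain ⟨y, hy, rfl⟩ := List.mem_map.mp hα
    have hβk : β ≤ k := hk ▸ le_wmax hβ
    have := ha.pos y hy
    omega
  -- translate via the second representation into a descent of a'
  apply ha'.2.2 a.length
  refine ⟨ha1, by omega, ?_⟩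
  intro α0 hα0 β0 hβ0
  have hα : α0 + k' ∈ (a.map (· + k) ++ b).take a.length := by
    rw [heq, List.take_append, List.length_map]
    refine List.mem_append_left _ ?_
    rw [← List.map_take]
    exact List.mem_map.mpr ⟨α0, hα0, rfl⟩
  have hβ : β0 + k' ∈ (a.map (· + k) ++ b).drop a.length := by
    rw [heq, List.drop_append, List.length_map]
    refine List.mem_append_left _ ?_
    rw [← List.map_drop]
    exact List.mem_map.mpr ⟨β0, hβ0, rfl⟩
  have := hprop _ hα _ hβ
  omega

theorem block_len_unique {a a' b b' : List ℕ} {k k' : ℕ}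
    (ha : Irred a) (ha' : Irred a')
    (heq : a.map (· + k) ++ b = a'.map (· + k') ++ b')
    (hk : k = wmax b) (hk' : k' = wmax b') : a.length = a'.length := by
  rcases lt_trichotomy a.length a'.length with h | h | h
  · exact absurd (block_len_aux ha ha' heq hk h) (by simp)
  · exact h
  · exact absurd (block_len_aux ha' ha heq.symm hk' h) (by simp)

/-- Setup facts for the word of a packed tree node. -/
theorem node_setup {I : List ℕ} {fl fr : List LTree} (hpt : IsPT (.node I fl fr)) :
    (toGaps 0 I).length = I.length ∧ toGaps 0 I ≠ [] ∧
    (toGaps 0 I).sum ≤ (wordF fr).length ∧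
    (wordF fl).length = forestWeight fl ∧ (wordF fr).length = forestWeight fr ∧
    IsPacked (wordF fl) ∧ IsPacked (wordF fr) ∧
    wmax (wordT (.node I fl fr)) = wmax (wordF fr) + wmax (wordF fl) + 1 := by
  have hIne : I ≠ [] := hpt.label_ne_nil
  have hIsort : I.Pairwise (· < ·) := hpt.label_sorted
  have hIpos : ∀ i ∈ I, 0 < i := hpt.label_pos
  have hsubl : ∀ t ∈ fl, (wordT t).length = t.weight ∧ Irred (wordT t) :=
    fun t ht => wordT_master t.weight t (hpt.fl_mem t ht) le_rfl
  have hsubr : ∀ t ∈ fr, (wordT t).length = t.weight ∧ Irred (wordT t) :=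
    fun t ht => wordT_master t.weight t (hpt.fr_mem t ht) le_rfl
  obtain ⟨hlenL, hpackL⟩ := wordF_props fl hsubl
  obtain ⟨hlenR, hpackR⟩ := wordF_props fr hsubr
  have hGlen : (toGaps 0 I).length = I.length := length_toGaps 0 I
  have hGne : toGaps 0 I ≠ [] := toGaps_ne_nil hIne
  have hGsum : (toGaps 0 I).sum ≤ (wordF fr).length := by
    rcases eq_or_ne fr [] with rfl | hfr
    · have hrange := hpt.fr_nil rfl
      have h2 : List.range' 1 I.length = fromGaps 0 (List.replicate I.length 0) := by
        rw [fromGaps_zeros (by simp)]; simp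
      have h1 : toGaps 0 I = List.replicate I.length 0 := by
        conv_lhs => rw [hrange, h2]
        rw [toGaps_fromGaps]
      rw [h1]
      simp
    · have hcond := hpt.fr_cond hfr
      have hlast : I.getLastI = I.length + (toGaps 0 I).sum :=
        label_gaps_sum hIne hIsort hIpos
      have hrw : rightWeight (.node I fl fr) = I.length + forestWeight fr := by
        rw [rightWeight]
      rw [hrw, hlast] at hcond
      rw [hlenR]
      omega
  refine ⟨hGlen, hGne, hGsum, hlenL, hlenR, hpackL, hpackR, ?_⟩
  rw [wordT_node, wmax_append]
  have hzm : wmax (wordF fr) + wmax (wordF fl) + 1 ∈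
      place (wmax (wordF fr) + wmax (wordF fl) + 1) (toGaps 0 I) (wordF fr) :=
    mem_place_self _ _ hGne
  have humax : wmax ((wordF fl).map (· + wmax (wordF fr))) ≤
      wmax (wordF fl) + wmax (wordF fr) := wmax_shift_le _ _
  have hzmax : wmax (place (wmax (wordF fr) + wmax (wordF fl) + 1) (toGaps 0 I) (wordF fr)) =
      wmax (wordF fr) + wmax (wordF fl) + 1 := by
    apply le_antisymm
    · apply wmax_le_iff.mpr
      intro x hx
      rcases mem_of_mem_place hx with hx | rfl
      · have := le_wmax hx; omega
      · exact le_rfl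
    · exact le_wmax hzm
  rw [hzmax]
  omega
-- ====== Group I : injectivity master ======
theorem inj_master : ∀ n : ℕ,
    (∀ t t', IsPT t → IsPT t' → t.weight ≤ n → wordT t = wordT t' → t = t') ∧
    (∀ ts ts', (∀ s ∈ ts, IsPT s) → (∀ s ∈ ts', IsPT s) → forestWeight ts ≤ n →
      wordF ts = wordF ts' → ts = ts') := by
  intro n
  induction n using Nat.strong_induction_on with
  | _ n ihn =>
  have Htree : ∀ t t', IsPT t → IsPT t' → t.weight ≤ n → wordT t = wordT t' → t = t' := by
    rintro ⟨I, fl, fr⟩ ⟨I', fl', fr'⟩ hpt hpt' hwt heq0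
    rw [weight_node] at hwt
    have hp1 : 1 ≤ I.length := by
      have := hpt.label_ne_nil; cases I; simp at this; simp
    obtain ⟨hGlen, hGne, hGsum, hlenL, hlenR, hpackL, hpackR, hw1⟩ := node_setup hpt
    obtain ⟨hGlen', hGne', hGsum', hlenL', hlenR', hpackL', hpackR', hw1'⟩ := node_setup hpt'
    have hmm' : wmax (wordF fr) + wmax (wordF fl) + 1 =
        wmax (wordF fr') + wmax (wordF fl') + 1 := by
      rw [← hw1, ← hw1', heq0]
    have heq := heq0
    rw [wordT_node, wordT_node] at heq
    -- the word of the concatenated forest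
    have happ : wordF (fl ++ fr) =
        (wordF fl).map (· + wmax (wordF fr)) ++ wordF fr := wordF_append fl fr
    have happ' : wordF (fl' ++ fr') =
        (wordF fl').map (· + wmax (wordF fr')) ++ wordF fr' := wordF_append fl' fr'
    -- filtering out the maximal letter
    set m := wmax (wordF fr) + wmax (wordF fl) + 1 with hmdef
    have humem : ∀ x ∈ (wordF fl).map (· + wmax (wordF fr)), x < m := by
      intro x hx
      obtain ⟨y, hy, rfl⟩ := List.mem_map.mp hx
      have := le_wmax hy
      omega
    have humem' : ∀ x ∈ (wordF fl').map (· + wmax (wordF fr')), x < m := by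
      intro x hx
      obtain ⟨y, hy, rfl⟩ := List.mem_map.mp hx
      have := le_wmax hy
      omega
    have hmv : m ∉ wordF fr := fun h => by have := le_wmax h; omega
    have hmv' : m ∉ wordF fr' := fun h => by have := le_wmax h; omega
    have hfilter : (wordF fl).map (· + wmax (wordF fr)) ++ wordF fr =
        (wordF fl').map (· + wmax (wordF fr')) ++ wordF fr' := by
      have h1 := congrArg (List.filter (fun x => x ≠ m)) heq
      rw [List.filter_append, List.filter_append, filter_place m hmv,
        ← hmm', filter_place m hmv'] at h1
      rwa [List.filter_eq_self.mpr (fun a ha => by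
          simpa using Nat.ne_of_lt (humem a ha)),
        List.filter_eq_self.mpr (fun a ha => by
          simpa using Nat.ne_of_lt (humem' a ha))] at h1
    -- forests agree
    have hcs : fl ++ fr = fl' ++ fr' := by
      refine (ihn (n-1) (by omega)).2 (fl ++ fr) (fl' ++ fr') ?_ ?_ ?_ ?_
      · intro s hs
        rcases List.mem_append.mp hs with h | h
        · exact hpt.fl_mem s h
        · exact hpt.fr_mem s h
      · intro s hs
        rcases List.mem_append.mp hs with h | h
        · exact hpt'.fl_mem s h
        · exact hpt'.fr_mem s h
      · rw [forestWeight_append]; omega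
      · rw [happ, happ', hfilter]
    -- position of the first maximal letter
    obtain ⟨g1, T, hGT⟩ : ∃ g T, toGaps 0 I = g :: T := by
      rcases hG : toGaps 0 I with _ | ⟨g, T⟩
      · exact absurd hG hGne
      · exact ⟨g, T, rfl⟩
    obtain ⟨g1', T', hGT'⟩ : ∃ g T, toGaps 0 I' = g :: T := by
      rcases hG : toGaps 0 I' with _ | ⟨g, T⟩
      · exact absurd hG hGne'
      · exact ⟨g, T, rfl⟩
    have hg1v : g1 ≤ (wordF fr).length := by
      rw [hGT] at hGsum; simp only [List.sum_cons] at hGsum; omega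
    have hg1v' : g1' ≤ (wordF fr').length := by
      rw [hGT'] at hGsum'; simp only [List.sum_cons] at hGsum'; omega
    have hfirst : (wordF fl).map (· + wmax (wordF fr)) ++ (wordF fr).take g1 =
        (wordF fl').map (· + wmax (wordF fr')) ++ (wordF fr').take g1' := by
      rw [hGT, hGT', place_cons, place_cons, ← hmm'] at heq
      rw [← List.append_assoc, ← List.append_assoc] at heq
      exact (first_occ_unique
        (fun h => by
          rcases List.mem_append.mp h with h | h
          · exact absurd rfl (Nat.ne_of_lt (humem m h))
          · exact hmv (List.mem_of_mem_take h))
        (fun h => by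
          rcases List.mem_append.mp h with h | h
          · exact absurd rfl (Nat.ne_of_lt (humem' m h))
          · exact hmv' (List.mem_of_mem_take h)) heq).1
    have hflen : forestWeight fl + g1 = forestWeight fl' + g1' := by
      have := congrArg List.length hfirst
      rw [List.length_append, List.length_append, List.length_map, List.length_map,
        List.length_take, List.length_take, hlenL, hlenL',
        min_eq_left hg1v, min_eq_left hg1v'] at this
      omega
    -- the head conditions
    have hhead : fr ≠ [] → g1 + 1 ≤ fr.headI.weight := by
      intro hfr
      obtain ⟨g0, T0, hG0, hh0⟩ := label_headI hpt.label_ne_nil hpt.label_sorted hpt.label_pos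
      rw [hGT] at hG0
      injection hG0 with e1 _
      have := (hpt.fr_cond hfr).2.1
      omega
    have hhead' : fr' ≠ [] → g1' + 1 ≤ fr'.headI.weight := by
      intro hfr
      obtain ⟨g0, T0, hG0, hh0⟩ := label_headI hpt'.label_ne_nil hpt'.label_sorted hpt'.label_pos
      rw [hGT'] at hG0
      injection hG0 with e1 _
      have := (hpt'.fr_cond hfr).2.1
      omega
    -- the left forests have equal length
    have hfllen : fl.length = fl'.length := by
      rcases lt_trichotomy fl.length fl'.length with hlt | hlen | hlt
      · exfalso
        have hpre : fl = fl'.take fl.length := by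
          have h := congrArg (List.take fl.length) hcs
          rw [List.take_left, List.take_append,
            Nat.sub_eq_zero_of_le hlt.le, List.take_zero, List.append_nil] at h
          exact h
        obtain ⟨mid0, mid', hmid⟩ : ∃ m0 mid', fl'.drop fl.length = m0 :: mid' := by
          rcases hd : fl'.drop fl.length with _ | ⟨m0, mid'⟩
          · have := congrArg List.length hd
            rw [List.length_drop] at this
            simp at this
            omega
          · exact ⟨m0, mid', rfl⟩
        have hfl' : fl' = fl ++ (mid0 :: mid') := by
          conv_lhs => rw [← List.take_append_drop fl.length fl', ← hpre, hmid]
        have hfr : fr = (mid0 :: mid') ++ fr' := by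
          rw [hfl'] at hcs
          rw [List.append_assoc] at hcs
          exact List.append_cancel_left hcs
        have hfrne : fr ≠ [] := by rw [hfr]; simp
        have hfrh : fr.headI = mid0 := by rw [hfr]; rfl
        have hw0 : forestWeight fl' = forestWeight fl + (mid0.weight + forestWeight mid') := by
          rw [hfl', forestWeight_append, forestWeight_cons]
        have h1 := hhead hfrne
        rw [hfrh] at h1
        omega
      · exact hlen
      · exfalso
        have hpre : fl' = fl.take fl'.length := by
          have h := congrArg (List.take fl'.length) hcs.symm
          rw [List.take_left, List.take_append,
            Nat.sub_eq_zero_of_le hlt.le, List.take_zero, List.append_nil] at h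
          exact h
        obtain ⟨mid0, mid', hmid⟩ : ∃ m0 mid', fl.drop fl'.length = m0 :: mid' := by
          rcases hd : fl.drop fl'.length with _ | ⟨m0, mid'⟩
          · have := congrArg List.length hd
            rw [List.length_drop] at this
            simp at this
            omega
          · exact ⟨m0, mid', rfl⟩
        have hfl' : fl = fl' ++ (mid0 :: mid') := by
          conv_lhs => rw [← List.take_append_drop fl'.length fl, ← hpre, hmid]
        have hfr : fr' = (mid0 :: mid') ++ fr := by
          rw [hfl'] at hcs
          rw [List.append_assoc] at hcs
          exact List.append_cancel_left hcs.symm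
        have hfrne : fr' ≠ [] := by rw [hfr]; simp
        have hfrh : fr'.headI = mid0 := by rw [hfr]; rfl
        have hw0 : forestWeight fl = forestWeight fl' + (mid0.weight + forestWeight mid') := by
          rw [hfl', forestWeight_append, forestWeight_cons]
        have h1 := hhead' hfrne
        rw [hfrh] at h1
        omega
    obtain ⟨hfleq, hfreq⟩ := List.append_inj hcs hfllen
    subst hfleq
    subst hfreq
    -- now the right parts agree
    have hueq : ((wordF fl).map (· + wmax (wordF fr)) : List ℕ) =
        (wordF fl).map (· + wmax (wordF fr)) := rfl
    have hz : place m (toGaps 0 I) (wordF fr) = place m (toGaps 0 I') (wordF fr) := by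
      rw [← hmm'] at heq
      exact List.append_cancel_left heq
    have hGG : toGaps 0 I = toGaps 0 I' := (place_inj m hmv hmv hGsum hGsum' hz).1
    have hII : I = I' := by
      have e1 : fromGaps 0 (toGaps 0 I) = I :=
        fromGaps_toGaps hpt.label_sorted hpt.label_pos
      have e2 : fromGaps 0 (toGaps 0 I') = I' :=
        fromGaps_toGaps hpt'.label_sorted hpt'.label_pos
      rw [← e1, ← e2, hGG]
    rw [hII]
  refine ⟨Htree, ?_⟩
  intro ts ts' hts hts' hwts heq
  match ts, ts' with
  | [], [] => rfl
  | [], t' :: r' =>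
    exfalso
    rw [wordF_nil, wordF_cons] at heq
    have hne : wordT t' ≠ [] :=
      (wordT_master t'.weight t' (hts' t' (List.mem_cons_self)) le_rfl).2.ne_nil
    rcases ht : wordT t' with _ | ⟨y, ys⟩
    · exact hne ht
    · rw [ht] at heq; simp at heq
  | t :: r, [] =>
    exfalso
    rw [wordF_nil, wordF_cons] at heq
    have hne : wordT t ≠ [] :=
      (wordT_master t.weight t (hts t (List.mem_cons_self)) le_rfl).2.ne_nil
    rcases ht : wordT t with _ | ⟨y, ys⟩
    · exact hne ht
    · rw [ht] at heq; simp at heq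
  | t :: r, t' :: r' =>
    rw [wordF_cons, wordF_cons] at heq
    have hIrr : Irred (wordT t) :=
      (wordT_master t.weight t (hts t (List.mem_cons_self)) le_rfl).2
    have hIrr' : Irred (wordT t') :=
      (wordT_master t'.weight t' (hts' t' (List.mem_cons_self)) le_rfl).2
    have hlen : (wordT t).length = (wordT t').length :=
      block_len_unique hIrr hIrr' heq rfl rfl
    obtain ⟨h1, h2⟩ := List.append_inj heq (by rw [List.length_map, List.length_map, hlen])
    have hk : wmax (wordF r) = wmax (wordF r') := by rw [h2]
    have htt : wordT t = wordT t' := by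
      apply shift_injective (wmax (wordF r))
      rw [h1, hk]
    have hwtt : (wordT t).length = t.weight :=
      (wordT_master t.weight t (hts t (List.mem_cons_self)) le_rfl).1
    have hwt1 : 1 ≤ t.weight := by
      have := hIrr.ne_nil
      rcases ht : wordT t with _ | _
      · exact absurd ht this
      · rw [← hwtt, ht]; simp
    have e1 : t = t' := Htree t t' (hts t (List.mem_cons_self))
      (hts' t' (List.mem_cons_self))
      (by rw [forestWeight_cons] at hwts; omega) htt
    have e2 : r = r' := by
      refine ((ihn (n-1) (by rw [forestWeight_cons] at hwts; omega)).2 r r'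
        (fun s hs => hts s (List.mem_cons_of_mem _ hs))
        (fun s hs => hts' s (List.mem_cons_of_mem _ hs))
        (by rw [forestWeight_cons] at hwts; omega) h2)
    rw [e1, e2]
-- ====== Group J : surjectivity ======
theorem split_exists : ∀ (ts : List LTree) (g : ℕ), ∃ fl fr, ts = fl ++ fr ∧
    forestWeight fl ≤ g ∧ (fr = [] ∨ g - forestWeight fl < fr.headI.weight) := by
  intro ts
  induction ts with
  | nil => exact fun g => ⟨[], [], by simp, by simp [forestWeight_nil], Or.inl rfl⟩
  | cons t ts ih =>
    intro g
    by_cases h : t.weight ≤ g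
    · obtain ⟨fl, fr, h1, h2, h3⟩ := ih (g - t.weight)
      refine ⟨t :: fl, fr, by rw [List.cons_append, ← h1], ?_, ?_⟩
      · rw [forestWeight_cons]; omega
      · rcases h3 with h3 | h3
        · exact Or.inl h3
        · refine Or.inr ?_
          rw [forestWeight_cons]
          omega
    · exact ⟨[], t :: ts, rfl, by simp [forestWeight_nil], Or.inr (by
        simp only [forestWeight_nil, List.headI]; omega)⟩

theorem filter_length_count (m : ℕ) (w : List ℕ) :
    (w.filter (fun x => x ≠ m)).length + w.count m = w.length := by
  induction w with
  | nil => rfl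
  | cons x w ih =>
    by_cases hx : x = m
    · subst hx
      rw [List.filter_cons_of_neg (by simp), List.count_cons_self, List.length_cons]
      omega
    · rw [List.filter_cons_of_pos (by simpa using hx),
        List.count_cons_of_ne hx, List.length_cons, List.length_cons]
      omega

theorem surj_master : ∀ n : ℕ,
    (∀ w, Irred w → w.length = n → ∃ t, IsPT t ∧ wordT t = w) ∧
    (∀ x, IsPacked x → x.length = n → ∃ ts, (∀ s ∈ ts, IsPT s) ∧ wordF ts = x) := by
  intro n
  induction n using Nat.strong_induction_on with
  | _ n ihn =>
  have Htree : ∀ w, Irred w → w.length = n → ∃ t, IsPT t ∧ wordT t = w := by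
    intro w hIrr hlen
    have hwne : w ≠ [] := hIrr.ne_nil
    have hn1 : 1 ≤ n := by
      rcases hx : w with _ | _
      · exact absurd hx hwne
      · rw [← hlen, hx]; simp
    have hm1 : 1 ≤ wmax w := by
      obtain ⟨y, hy⟩ := List.exists_mem_of_ne_nil w hwne
      have h1 := hIrr.pos y hy
      have h2 := le_wmax hy
      omega
    set m := wmax w with hmw
    have hmem : m ∈ w := hIrr.packed.2 m hm1 le_rfl
    set w2 := w.filter (fun x => x ≠ m) with hw2
    have hplace : place m (mgaps m w) w2 = w := place_mgaps m w
    have hp : (mgaps m w).length = w.count m := length_mgaps m w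
    have hppos : 1 ≤ w.count m := List.count_pos_iff.mpr hmem
    have hG0sum : (mgaps m w).sum ≤ w2.length := sum_mgaps_le m w
    have hw2len : w2.length + w.count m = n := by rw [← hlen]; exact filter_length_count m w
    obtain ⟨g1, T, hGT⟩ : ∃ g T, mgaps m w = g :: T := by
      rcases hG : mgaps m w with _ | ⟨g, T⟩
      · exfalso
        rw [hG] at hp
        rw [← hp] at hppos
        simp at hppos
      · exact ⟨g, T, rfl⟩
    have hw2sub : ∀ x ∈ w2, x ∈ w ∧ x ≠ m := by
      intro x hx
      rw [hw2] at hx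
      have := List.mem_filter.mp hx
      exact ⟨this.1, by simpa using this.2⟩
    have hw2lt : ∀ x ∈ w2, x < m := by
      intro x hx
      obtain ⟨h1, h2⟩ := hw2sub x hx
      have := le_wmax h1
      omega
    have hw2max : wmax w2 = m - 1 := by
      rcases eq_or_ne w2 [] with hw2e | hw2e
      · rw [hw2e]
        rcases Nat.lt_or_ge 1 m with h2 | h2
        · exfalso
          have h3 : m - 1 ∈ w := hIrr.packed.2 (m - 1) (by omega) (by omega)
          have h4 : m - 1 ∈ w2 := by
            rw [hw2]
            refine List.mem_filter.mpr ⟨h3, by simp; omega⟩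
          rw [hw2e] at h4
          simp at h4
        · rw [show wmax ([] : List ℕ) = 0 from rfl]; omega
      · have hm2 : 2 ≤ m := by
          obtain ⟨y, hy⟩ := List.exists_mem_of_ne_nil _ hw2e
          have h4 := hw2lt y hy
          have h5 := hIrr.pos y (hw2sub y hy).1
          omega
        apply le_antisymm
        · have h3 := wmax_mem hw2e
          have := hw2lt _ h3
          omega
        · have h3 : m - 1 ∈ w2 := by
            rw [hw2]
            refine List.mem_filter.mpr
              ⟨hIrr.packed.2 (m-1) (by omega) (by omega), by simp; omega⟩
          have := le_wmax h3
          omega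
    have hw2pack : IsPacked w2 := by
      constructor
      · intro x hx
        exact hIrr.pos x (hw2sub x hx).1
      · intro i hi hile
        rw [hw2max] at hile
        have h1 : i ∈ w := hIrr.packed.2 i hi (by omega)
        rw [hw2]
        exact List.mem_filter.mpr ⟨h1, by simp; omega⟩
    obtain ⟨ts, hts, hwF⟩ := (ihn w2.length (by omega)).2 w2 hw2pack rfl
    obtain ⟨fl, fr, hsplit, hfwle, hsplitmax⟩ := split_exists ts g1
    have htsl : ∀ s ∈ fl, IsPT s := fun s hs =>
      hts s (by rw [hsplit]; exact List.mem_append_left _ hs)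
    have htsr : ∀ s ∈ fr, IsPT s := fun s hs =>
      hts s (by rw [hsplit]; exact List.mem_append_right _ hs)
    have hsubl : ∀ t ∈ fl, (wordT t).length = t.weight ∧ Irred (wordT t) :=
      fun t ht => wordT_master t.weight t (htsl t ht) le_rfl
    have hsubr : ∀ t ∈ fr, (wordT t).length = t.weight ∧ Irred (wordT t) :=
      fun t ht => wordT_master t.weight t (htsr t ht) le_rfl
    obtain ⟨hlenL, hpackL⟩ := wordF_props fl hsubl
    obtain ⟨hlenR, hpackR⟩ := wordF_props fr hsubr
    have happ : w2 = (wordF fl).map (· + wmax (wordF fr)) ++ wordF fr := by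
      rw [← hwF, hsplit]
      exact wordF_append fl fr
    have hulen : ((wordF fl).map (· + wmax (wordF fr))).length = forestWeight fl := by
      rw [List.length_map, hlenL]
    have hplace2 : w = (wordF fl).map (· + wmax (wordF fr)) ++
        place m ((g1 - forestWeight fl) :: T) (wordF fr) := by
      rw [← hplace, hGT]
      conv_lhs => rw [happ]
      rw [place_append m g1 T (wordF fr) (by rw [hulen]; exact hfwle), hulen]
    have hvslen : (wordF fr).length + forestWeight fl = w2.length := by
      have h2 := congrArg List.length happ
      rw [List.length_append, hulen] at h2
      omega
    have hGsum : ((g1 - forestWeight fl) :: T).sum ≤ (wordF fr).length := by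
      rw [hGT] at hG0sum
      simp only [List.sum_cons] at hG0sum ⊢
      omega
    have hmeq : m = wmax (wordF fr) + wmax (wordF fl) + 1 := by
      rcases eq_or_ne fl [] with rfl | hfl
      · rw [wordF_nil] at happ ⊢
        simp only [List.map_nil, List.nil_append] at happ
        rw [← happ]
        have h0 : wmax ([] : List ℕ) = 0 := rfl
        rw [h0, hw2max]
        omega
      · have hFLne : wordF fl ≠ [] := by
          intro hcon
          obtain ⟨t0, hl0⟩ : ∃ t0, t0 ∈ fl := by
            cases fl; simp at hfl; exact ⟨_, List.mem_cons_self⟩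
          have h1 : 1 ≤ t0.weight := (htsl t0 hl0).one_le_weight
          have h2 := mem_forest_weight_le hl0
          rw [hcon] at hlenL
          simp at hlenL
          omega
        have h3 : wmax w2 = wmax (wordF fl) + wmax (wordF fr) := by
          rw [happ, wmax_append, wmax_shift hFLne]
          omega
        rw [hw2max] at h3
        omega
    have hwlen2 : n = forestWeight fl + (T.length + 1) + (wordF fr).length := by
      have h2 := congrArg List.length hplace2
      rw [hlen, List.length_append, hulen, length_place m hGsum] at h2
      rw [h2]
      simp only [List.length_cons]
      omega
    -- the label
    have hfg : fromGaps 0 ((g1 - forestWeight fl) :: T) ≠ [] := fromGaps_ne_nil (by simp)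
    have hfgsort := sorted_fromGaps 0 ((g1 - forestWeight fl) :: T)
    have hfgpos := mem_fromGaps_gt 0 ((g1 - forestWeight fl) :: T)
    have hfgt : toGaps 0 (fromGaps 0 ((g1 - forestWeight fl) :: T)) =
        (g1 - forestWeight fl) :: T := toGaps_fromGaps _ _
    have hIlen : (fromGaps 0 ((g1 - forestWeight fl) :: T)).length = T.length + 1 := by
      rw [length_fromGaps]; rfl
    have hIlast : (fromGaps 0 ((g1 - forestWeight fl) :: T)).getLastI =
        (T.length + 1) + ((g1 - forestWeight fl) + T.sum) := by
      rw [getLastI_fromGaps 0 (by simp)]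
      simp only [List.sum_cons, List.length_cons]
      omega
    refine ⟨.node (fromGaps 0 ((g1 - forestWeight fl) :: T)) fl fr, ?_, ?_⟩
    · constructor
      · exact hfg
      · exact hfgsort
      · exact fun i hi => hfgpos i hi
      · intro hfre
        subst hfre
        rw [wordF_nil] at hGsum
        simp only [List.length_nil] at hGsum
        have h0 : ((g1 - forestWeight fl) :: T).sum = 0 := by
          simp only [List.sum_cons] at hGsum ⊢
          omega
        rw [fromGaps_zeros h0]
        simp
      · intro hfr
        have hhead : (fromGaps 0 ((g1 - forestWeight fl) :: T)).headI =
            (g1 - forestWeight fl) + 1 := by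
          rw [headI_fromGaps]
          omega
        have hrw : rightWeight (.node (fromGaps 0 ((g1 - forestWeight fl) :: T)) fl fr) =
            (T.length + 1) + forestWeight fr := by
          rw [rightWeight, hIlen]
        have hsm : g1 - forestWeight fl < fr.headI.weight := by
          rcases hsplitmax with h | h
          · exact absurd h hfr
          · exact h
        refine ⟨by omega, by rw [hhead]; omega, ?_, ?_⟩
        · rw [hrw, hIlast, ← hlenR]
          simp only [List.sum_cons] at hGsum
          omega
        · -- the hard condition : uses irreducibility of w
          rw [hrw, hIlast, ← hlenR]
          by_contra hcon
          push_neg at hcon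
          have hglI : fr.getLastI = fr.getLast hfr := getLastI_eq_getLast fr hfr
          obtain ⟨A, hA1, hA2, hA3⟩ := wordF_last fr hfr hsubr
          have hglmem : fr.getLast hfr ∈ fr := List.getLast_mem hfr
          have hwd : (wordT (fr.getLast hfr)).length = (fr.getLast hfr).weight :=
            (hsubr _ hglmem).1
          have hwd1 : 1 ≤ (fr.getLast hfr).weight := (htsr _ hglmem).one_le_weight
          have hAlen : A.length + (fr.getLast hfr).weight = (wordF fr).length := by
            rw [hlenR]; exact hA2
          rw [hglI] at hcon
          -- now (g1 - forestWeight fl) + T.sum + weight(last) ≤ (wordF fr).length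
          have hkey : ((g1 - forestWeight fl) + T.sum) + (fr.getLast hfr).weight ≤
              (wordF fr).length := by
            simp only [List.sum_cons] at hGsum
            omega
          -- construct a global descent of w
          apply hIrr.2.2 (n - (fr.getLast hfr).weight)
          refine ⟨by omega, by rw [hlen]; omega, ?_⟩
          have hdrop : w.drop (n - (fr.getLast hfr).weight) = wordT (fr.getLast hfr) := by
            rw [hplace2, drop_append_of_ge _ _ _ (by rw [hulen]; omega), hulen,
              drop_place m hGsum (by simp only [List.length_cons, List.sum_cons]; omega)]
            simp only [List.length_cons]
            have harith : n - (fr.getLast hfr).weight - forestWeight fl - (T.length + 1) =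
                A.length := by omega
            rw [harith, hA1, drop_append_of_ge A _ _ le_rfl]
            simp
          intro a ha b hb
          rw [hdrop] at hb
          have hbmu : b ≤ wmax (wordT (fr.getLast hfr)) := le_wmax hb
          have hmuM : wmax (wordT (fr.getLast hfr)) ≤ wmax (wordF fr) := by
            apply wmax_le_iff.mpr
            intro y hy
            apply le_wmax
            rw [hA1]
            exact List.mem_append_right _ hy
          -- locate a
          have hha : 0 < (w.take (n - (fr.getLast hfr).weight)).count a :=
            List.count_pos_iff.mpr ha
          rcases eq_or_ne a m with rfl | ham
          · omega
          · have e1 := count_take_drop a (n - (fr.getLast hfr).weight) w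
            have e2 : (w.drop (n - (fr.getLast hfr).weight)).count a =
                (wordT (fr.getLast hfr)).count a := by rw [hdrop]
            have e3 : w.count a = ((wordF fl).map (· + wmax (wordF fr))).count a +
                (place m ((g1 - forestWeight fl) :: T) (wordF fr)).count a := by
              conv_lhs => rw [hplace2]
              rw [List.count_append]
            have e4 : (place m ((g1 - forestWeight fl) :: T) (wordF fr)).count a =
                (wordF fr).count a := count_place_ne ham _ _
            have e5 : (wordF fr).count a = A.count a + (wordT (fr.getLast hfr)).count a := by
              rw [hA1, List.count_append]
            have e6 : 0 < ((wordF fl).map (· + wmax (wordF fr))).count a + A.count a := by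
              omega
            rcases Nat.eq_zero_or_pos (((wordF fl).map (· + wmax (wordF fr))).count a) with
              h7 | h7
            · have h8 : a ∈ A := List.count_pos_iff.mp (by omega)
              have := hA3 a h8
              omega
            · have h8 : a ∈ (wordF fl).map (· + wmax (wordF fr)) := List.count_pos_iff.mp h7
              obtain ⟨y, hy, rfl⟩ := List.mem_map.mp h8
              have := hpackL.1 y hy
              omega
      · exact htsl
      · exact htsr
    · rw [wordT_node, hfgt, ← hmeq]
      exact hplace2.symm
  refine ⟨Htree, ?_⟩
  intro x hx hxlen
  rcases eq_or_ne x [] with rfl | hxe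
  · exact ⟨[], by simp, wordF_nil⟩
  · classical
    have hxlen1 : 1 ≤ x.length := by
      cases x; simp at hxe; simp
    have hex : ∃ c, 1 ≤ c ∧ (c = x.length ∨ GlobalDescent x c) :=
      ⟨x.length, hxlen1, Or.inl rfl⟩
    obtain ⟨hc01, hc0spec⟩ := Nat.find_spec hex
    have hmin : ∀ c < Nat.find hex, ¬(1 ≤ c ∧ (c = x.length ∨ GlobalDescent x c)) :=
      fun c h => Nat.find_min hex h
    have hc0len : Nat.find hex ≤ x.length := Nat.find_min' hex ⟨hxlen1, Or.inl rfl⟩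
    set c0 := Nat.find hex with hc0def
    have hab : x.take c0 ++ x.drop c0 = x := List.take_append_drop c0 x
    have halen : (x.take c0).length = c0 := by
      rw [List.length_take]; omega
    have hane : x.take c0 ≠ [] := by
      apply List.ne_nil_of_length_pos
      omega
    have hblen : (x.drop c0).length = x.length - c0 := List.length_drop
    have hblt : ∀ α ∈ x.take c0, ∀ β ∈ x.drop c0, β < α := by
      intro α hα β hβ
      have hbne : x.drop c0 ≠ [] := List.ne_nil_of_mem hβ
      have hc0lt : c0 < x.length := by
        by_contra hcon
        push_neg at hcon
        have : x.drop c0 = [] := List.drop_eq_nil_of_le hcon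
        exact hbne this
      rcases hc0spec with h | h
      · omega
      · exact h.2.2 α hα β hβ
    have hka : ∀ α ∈ x.take c0, wmax (x.drop c0) < α := by
      intro α hα
      rcases eq_or_ne (x.drop c0) [] with hbe | hbe
      · rw [hbe]
        have h1 : wmax ([] : List ℕ) = 0 := rfl
        rw [h1]
        exact hx.1 α (List.mem_of_mem_take hα)
      · exact hblt α hα _ (wmax_mem hbe)
    have hshift : ((x.take c0).map (· - wmax (x.drop c0))).map (· + wmax (x.drop c0)) =
        x.take c0 := by
      rw [List.map_map]
      have : ∀ α ∈ x.take c0, ((· + wmax (x.drop c0)) ∘ (· - wmax (x.drop c0))) α = id α := by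
        intro α hα
        have := hka α hα
        simp
        omega
      rw [List.map_congr_left this, List.map_id]
    have hbpack : IsPacked (x.drop c0) := by
      constructor
      · exact fun y hy => hx.1 y (List.mem_of_mem_drop hy)
      · intro i hi hile
        rcases eq_or_ne (x.drop c0) [] with hbe | hbe
        · rw [hbe] at hile
          have h1 : wmax ([] : List ℕ) = 0 := rfl
          rw [h1] at hile
          omega
        · have hkx : wmax (x.drop c0) ≤ wmax x := by
            apply le_wmax
            exact List.mem_of_mem_drop (wmax_mem hbe)
          have h2 : i ∈ x.take c0 ++ x.drop c0 := by
            rw [hab]; exact hx.2 i hi (by omega)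
          rcases List.mem_append.mp h2 with h3 | h3
          · exfalso
            have := hka i h3
            omega
          · exact h3
    -- the standardized first block
    have hapos : ∀ y ∈ (x.take c0).map (· - wmax (x.drop c0)), 0 < y := by
      intro y hy
      obtain ⟨α, hα, rfl⟩ := List.mem_map.mp hy
      have := hka α hα
      omega
    have hane2 : (x.take c0).map (· - wmax (x.drop c0)) ≠ [] := by
      intro hcon
      have := congrArg List.length hcon
      rw [List.length_map, halen] at this
      simp at this
      omega
    have hwa' : wmax (x.take c0) = wmax x := by
      apply le_antisymm
      · apply wmax_le_iff.mpr
        intro y hy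
        exact le_wmax (List.mem_of_mem_take hy)
      · have h1 : wmax x ∈ x.take c0 ++ x.drop c0 := by
          rw [hab]; exact wmax_mem hxe
        rcases List.mem_append.mp h1 with h2 | h2
        · exact le_wmax h2
        · exfalso
          obtain ⟨α, hα⟩ := List.exists_mem_of_ne_nil _ hane
          have h3 := hblt α hα _ h2
          have h4 : α ≤ wmax x := le_wmax (List.mem_of_mem_take hα)
          omega
    have hwa : wmax ((x.take c0).map (· - wmax (x.drop c0))) + wmax (x.drop c0) =
        wmax x := by
      rw [← hwa']
      conv_rhs => rw [← hshift]
      rw [wmax_shift hane2]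
    have hIrra : Irred ((x.take c0).map (· - wmax (x.drop c0))) := by
      refine ⟨⟨hapos, ?_⟩, hane2, ?_⟩
      · intro i hi hile
        have h1 : i + wmax (x.drop c0) ∈ x.take c0 ++ x.drop c0 := by
          rw [hab]; exact hx.2 _ (by omega) (by omega)
        rcases List.mem_append.mp h1 with h2 | h2
        · exact List.mem_map.mpr ⟨i + wmax (x.drop c0), h2, by omega⟩
        · exfalso
          have := le_wmax h2
          omega
      · intro c hGD
        obtain ⟨hc1, hc2, hprop⟩ := hGD
        rw [List.length_map, halen] at hc2
        apply hmin c (by omega)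
        refine ⟨hc1, Or.inr ⟨hc1, by omega, ?_⟩⟩
        intro α hα β hβ
        have htake : x.take c = (x.take c0).take c := by
          conv_lhs => rw [← hab]
          rw [List.take_append, halen,
            Nat.sub_eq_zero_of_le (by omega), List.take_zero, List.append_nil]
        have hdropx : x.drop c = (x.take c0).drop c ++ x.drop c0 := by
          conv_lhs => rw [← hab]
          rw [List.drop_append, halen,
            Nat.sub_eq_zero_of_le (by omega), List.drop_zero]
        rw [htake] at hα
        rw [hdropx] at hβ
        have hα' : α ∈ x.take c0 := List.mem_of_mem_take hα
        rcases List.mem_append.mp hβ with hβ1 | hβ1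
        · -- both inside the block : use the descent of the standardized block
          have hα2 : α ∈ ((((x.take c0).map (· - wmax (x.drop c0))).map
              (· + wmax (x.drop c0))).take c) := by rw [hshift]; exact hα
          rw [← List.map_take] at hα2
          obtain ⟨α0, hα0, rfl⟩ := List.mem_map.mp hα2
          have hβ2 : β ∈ ((((x.take c0).map (· - wmax (x.drop c0))).map
              (· + wmax (x.drop c0))).drop c) := by rw [hshift]; exact hβ1
          rw [← List.map_drop] at hβ2
          obtain ⟨β0, hβ0, rfl⟩ := List.mem_map.mp hβ2
          have := hprop α0 hα0 β0 hβ0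
          omega
        · have h1 := hka α hα'
          have h2 := le_wmax hβ1
          omega
    obtain ⟨t, hpt, hwt⟩ : ∃ t, IsPT t ∧
        wordT t = (x.take c0).map (· - wmax (x.drop c0)) := by
      rcases eq_or_ne c0 n with hc0n | hc0n
      · exact Htree _ hIrra (by rw [List.length_map, halen, hc0n])
      · exact (ihn c0 (by omega)).1 _ hIrra (by rw [List.length_map, halen])
    obtain ⟨tsb, htsb, hwb⟩ : ∃ ts, (∀ s ∈ ts, IsPT s) ∧ wordF ts = x.drop c0 :=
      (ihn (n - c0) (by omega)).2 _ hbpack (by rw [hblen, hxlen])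
    refine ⟨t :: tsb, ?_, ?_⟩
    · intro s hs
      rcases List.mem_cons.mp hs with rfl | hs
      · exact hpt
      · exact htsb s hs
    · rw [wordF_cons, hwb, hwt, hshift, hab]
theorem card_irreducible_eq_card_packedTrees (n : ℕ) (hn : 1 ≤ n) :
    Nat.card {w : List ℕ // Irred w ∧ w.length = n} =
      Nat.card {t : LTree // IsPT t ∧ t.weight = n} := by
  have hf : ∀ t : {t : LTree // IsPT t ∧ t.weight = n},
      Irred (wordT t.1) ∧ (wordT t.1).length = n := by
    rintro ⟨t, ht, hw⟩
    obtain ⟨h1, h2⟩ := wordT_master t.weight t ht le_rfl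
    exact ⟨h2, by rw [h1, hw]⟩
  let f : {t : LTree // IsPT t ∧ t.weight = n} → {w : List ℕ // Irred w ∧ w.length = n} :=
    fun t => ⟨wordT t.1, hf t⟩
  have hbij : Function.Bijective f := by
    constructor
    · rintro ⟨t, ht, hwt⟩ ⟨t', ht', hwt'⟩ heq
      have h1 : wordT t = wordT t' := congrArg Subtype.val heq
      have h2 : t = t' := (inj_master n).1 t t' ht ht' (le_of_eq hwt) h1
      exact Subtype.ext h2
    · rintro ⟨w, hI, hl⟩
      obtain ⟨t, hpt, hwt⟩ := (surj_master n).1 w hI hl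
      have hwn : t.weight = n := by
        rw [← (wordT_master t.weight t hpt le_rfl).1, hwt, hl]
      refine ⟨⟨t, hpt, hwn⟩, ?_⟩
      apply Subtype.ext
      exact hwt
  exact (Nat.card_congr (Equiv.ofBijective f hbij)).symm
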